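/- arXiv:2405.15235 — 2 statements merged into one kernel-verified Lean document; each statement's English description precedes it below -/
import Mathlib

section
/- Let G be the Lie algebra over a field K of characteristic 0 generated by five elements h, e₁, e₂, f₁, f₂ subject to the relations [h, eᵢ] = 2eᵢ, [h, fᵢ] = -2fᵢ, [eᵢ, fⱼ] = δ_{ij} h (i, j ∈ {1,2}), with no further relations beyond those making it the maximal Z-graded Lie algebra on this local data (deg eᵢ = 1, deg h = 0, deg fᵢ = -1). Then the Lie subalgebra of G generated by e₁ and e₂ is a free Lie algebra of rank two; in particular G contains a non-abelian free Lie subalgebra. -/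
namespace G2222

variable (K : Type) [Field K] [CharZero K]

/-- The free Lie algebra on the five generators `h, e₁, e₂, f₁, f₂`
(indexed by `0, 1, 2, 3, 4`). -/
abbrev F : Type := FreeLieAlgebra K (Fin 5)

/-- The generators. -/
noncomputable def gen (i : Fin 5) : F K := FreeLieAlgebra.of K i

noncomputable def hgen : F K := gen K 0
noncomputable def e : Fin 2 → F K := fun i => gen K ⟨1 + i, by omega⟩
noncomputable def f : Fin 2 → F K := fun i => gen K ⟨3 + i, by omega⟩

/-- The defining relators `[h,eᵢ] - 2eᵢ`, `[h,fᵢ] + 2fᵢ` and `[eᵢ,fⱼ] - δᵢⱼ h`.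
The Lie algebra `G(²²₂₂)` is the quotient of the free Lie algebra by the ideal
generated by these relators only; since these are exactly the local relations,
the quotient is the maximal `ℤ`-graded Lie algebra on this local data
(`deg eᵢ = 1`, `deg h = 0`, `deg fᵢ = -1`). -/
noncomputable def relators : Set (F K) :=
  {x | ∃ i : Fin 2, x = ⁅hgen K, e K i⁆ - (2 : K) • e K i} ∪
  {x | ∃ i : Fin 2, x = ⁅hgen K, f K i⁆ + (2 : K) • f K i} ∪
  {x | ∃ i j : Fin 2, x = ⁅e K i, f K j⁆ - if i = j then hgen K else 0}

/-- The ideal of relations. -/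
noncomputable def I : LieIdeal K (F K) := LieSubmodule.lieSpan K (F K) (relators K)

/-- `G(²²₂₂)`, the contragredient Lie algebra with Cartan matrix all of whose
entries are `2`: the quotient of the free Lie algebra on `h, e₁, e₂, f₁, f₂`
by the ideal generated by the defining relators. -/
abbrev G : Type := F K ⧸ I K

/-- The images of the generators `e₁, e₂` in `G(²²₂₂)`. -/
noncomputable def E (i : Fin 2) : G K := LieSubmodule.Quotient.mk (N := I K) (e K i)


/-! ### Auxiliary development.

Part 1 establishes (following Dynkin–Specht–Wever) that the canonical morphism
from a free Lie algebra to the big word algebra (= free associative algebra,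
realized as a monoid algebra on the free monoid) is injective in
characteristic zero.  Part 2 constructs a representation of `G(²²₂₂)` on the
word algebra in two variables in which `e₁, e₂` act by left multiplication by
the two generators.  Parts 3 and 4 put everything together. -/

noncomputable section Aux

open FreeLieAlgebra FreeMonoid

set_option linter.unusedSectionVars false
set_option linter.unusedVariables false

attribute [local instance] LieRing.ofAssociativeRing



open FreeLieAlgebra FreeMonoid

variable (X : Type)

/-- The monoid algebra of words: the free associative algebra with word basis. -/
abbrev MA : Type := MonoidAlgebra K (FreeMonoid X)

/-- Basis word. -/
def sgl (l : List X) : MA K X := MonoidAlgebra.single (ofList l) 1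

theorem sgl_mul_sgl (l l' : List X) : sgl K X l * sgl K X l' = sgl K X (l ++ l') := by
  unfold sgl
  rw [MonoidAlgebra.single_mul_single, one_mul]
  rfl

/- Workaround lemmas for the `SMul`-instance diamond on `FreeLieAlgebra`. -/
section instFix
variable {K X}

theorem lsmul (c : K) (x y : FreeLieAlgebra K X) : ⁅x, c • y⁆ = c • ⁅x, y⁆ := lie_smul c x y

theorem lsmul' (c : K) (x y : FreeLieAlgebra K X) : ⁅c • x, y⁆ = c • ⁅x, y⁆ := smul_lie c x y

theorem fone_smul (u : FreeLieAlgebra K X) : (1 : K) • u = u := one_smul K u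

theorem fsmul_smul (c d : K) (u : FreeLieAlgebra K X) : c • d • u = (c * d) • u :=
  smul_smul c d u

theorem fsmul_comm (c d : K) (u : FreeLieAlgebra K X) : c • d • u = d • c • u :=
  smul_comm c d u

theorem fadd_smul (c d : K) (u : FreeLieAlgebra K X) : (c + d) • u = c • u + d • u :=
  add_smul c d u

theorem lcomb_single (v : FreeMonoid X → FreeLieAlgebra K X) (a : FreeMonoid X) (c : K) :
    Finsupp.linearCombination K v (Finsupp.single a c) = c • v a :=
  Finsupp.linearCombination_single K c a

theorem lcomb_msingle {α V : Type} [AddCommGroup V] [Module K V]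
    (v : α → V) (a : α) (c : K) :
    Finsupp.linearCombination K v (MonoidAlgebra.single a c : MonoidAlgebra K α).coeff = c • v a :=
  Finsupp.linearCombination_single K c a

end instFix

/-- Induction principle for the free Lie algebra. -/
theorem freeLie_induction {K X : Type} [Field K] {C : FreeLieAlgebra K X → Prop}
    (hof : ∀ x, C (of K x)) (hzero : C 0)
    (hadd : ∀ u v, C u → C v → C (u + v))
    (hsmul : ∀ (c : K) u, C u → C (c • u))
    (hlie : ∀ u v, C u → C v → C ⁅u, v⁆) (u : FreeLieAlgebra K X) : C u := by
  let S : LieSubalgebra K (FreeLieAlgebra K X) :=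
    { carrier := {u | C u}
      add_mem' := fun ha hb => hadd _ _ ha hb
      zero_mem' := hzero
      smul_mem' := fun c u hu => hsmul c u hu
      lie_mem' := fun ha hb => hlie _ _ ha hb }
  let σ : FreeLieAlgebra K X →ₗ⁅K⁆ S := lift K fun x => (⟨of K x, hof x⟩ : S)
  have h : S.incl.comp σ = LieHom.id := by
    apply hom_ext
    intro x
    simp [σ, lift_of_apply]
  have h2 : ((σ u : FreeLieAlgebra K X)) = u := LieHom.congr_fun h u
  have hu := (σ u).2
  rwa [h2] at hu

/-- Left-normed bracketing of a word. -/
def phiL : List X → FreeLieAlgebra K X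
  | [] => 0
  | [x] => of K x
  | x :: y :: t => ⁅of K x, phiL (y :: t)⁆

theorem phiL_single (x : X) : phiL K X [x] = of K x := by rw [phiL]

theorem phiL_cons (x y : X) (t : List X) :
    phiL K X (x :: y :: t) = ⁅of K x, phiL K X (y :: t)⁆ := by rw [phiL]

/-- The Dynkin-Specht-Wever linear map. -/
def phiT : MA K X →ₗ[K] FreeLieAlgebra K X :=
  Finsupp.linearCombination K (fun w => phiL K X (toList w)) ∘ₗ
    (MonoidAlgebra.coeffLinearEquiv K).toLinearMap

/-- The weighted Dynkin map. -/
def dynT : MA K X →ₗ[K] FreeLieAlgebra K X :=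
  Finsupp.linearCombination K (fun w =>
    ((toList w).length : K)⁻¹ • phiL K X (toList w)) ∘ₗ
    (MonoidAlgebra.coeffLinearEquiv K).toLinearMap

/-- The canonical Lie algebra morphism from the free Lie algebra to the word
algebra (with commutator bracket). -/
def ω : FreeLieAlgebra K X →ₗ⁅K⁆ MA K X :=
  lift K fun x => sgl K X [x]

theorem ω_of (x : X) : ω K X (of K x) = sgl K X [x] := lift_of_apply _ _

theorem phiT_sgl (l : List X) : phiT K X (sgl K X l) = phiL K X l := by
  unfold phiT sgl
  exact (lcomb_single _ _ _).trans (fone_smul _)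

theorem dynT_sgl (l : List X) :
    dynT K X (sgl K X l) = (l.length : K)⁻¹ • phiL K X l := by
  unfold dynT sgl
  exact (lcomb_single _ _ _).trans (fone_smul _)

/-- The span of nonempty words (inside the augmentation ideal). -/
def NN : Submodule K (MA K X) :=
  Submodule.span K {v | ∃ l : List X, l ≠ [] ∧ v = sgl K X l}

theorem mul_mem_NN (m : MA K X) {v : MA K X} (hv : v ∈ NN K X) :
    m * v ∈ NN K X := by
  induction hv using Submodule.span_induction with
  | mem v hv =>
    obtain ⟨l, hl, rfl⟩ := hv
    have key : ∀ m : MA K X, m * sgl K X l ∈ NN K X := by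
      intro m
      induction m using MonoidAlgebra.induction_linear with
      | zero => rw [zero_mul]; exact (NN K X).zero_mem
      | add a b ha hb => rw [add_mul]; exact (NN K X).add_mem ha hb
      | single a b =>
        have h1 : (MonoidAlgebra.single a b : MA K X) * sgl K X l
            = b • sgl K X (toList a ++ l) := by
          unfold sgl
          rw [MonoidAlgebra.single_mul_single, mul_one, MonoidAlgebra.smul_single', mul_one]
          show MonoidAlgebra.single (a * ofList l) b
              = MonoidAlgebra.single (ofList (toList a ++ l)) b
          rw [ofList_append, ofList_toList]
        rw [h1]
        exact (NN K X).smul_mem _ (Submodule.subset_span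
          ⟨toList a ++ l, by simp [hl], rfl⟩)
    exact key m
  | zero => rw [mul_zero]; exact (NN K X).zero_mem
  | add a b _ _ ha hb => rw [mul_add]; exact (NN K X).add_mem ha hb
  | smul c a _ ha => rw [mul_smul_comm]; exact (NN K X).smul_mem _ ha

theorem ω_mem_NN (u : FreeLieAlgebra K X) : ω K X u ∈ NN K X := by
  induction u using freeLie_induction with
  | hof x => rw [ω_of]; exact Submodule.subset_span ⟨[x], by simp, rfl⟩
  | hzero => rw [map_zero]; exact (NN K X).zero_mem
  | hadd u v hu hv => rw [map_add]; exact (NN K X).add_mem hu hv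
  | hsmul c u hu => rw [map_smul]; exact (NN K X).smul_mem _ hu
  | hlie u v hu hv =>
    rw [LieHom.map_lie, Ring.lie_def]
    exact (NN K X).sub_mem (mul_mem_NN K X _ hv) (mul_mem_NN K X _ hu)

theorem lemA (u : FreeLieAlgebra K X) :
    ∀ v ∈ NN K X, phiT K X (ω K X u * v) = ⁅u, phiT K X v⁆ := by
  induction u using freeLie_induction with
  | hof x =>
    intro v hv
    induction hv using Submodule.span_induction with
    | mem v hv =>
      obtain ⟨l, hl, rfl⟩ := hv
      obtain ⟨y, t, rfl⟩ := List.exists_cons_of_ne_nil hl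
      rw [ω_of, sgl_mul_sgl, phiT_sgl, phiT_sgl]
      exact phiL_cons K X x y t
    | zero => rw [mul_zero, LinearMap.map_zero, lie_zero]
    | add a b _ _ iha ihb =>
      rw [mul_add, LinearMap.map_add, LinearMap.map_add, iha, ihb, lie_add]
    | smul c a _ iha =>
      rw [mul_smul_comm, LinearMap.map_smul, LinearMap.map_smul, iha, lsmul]
  | hzero =>
    intro v hv
    rw [map_zero, zero_mul, LinearMap.map_zero, zero_lie]
  | hadd u₁ u₂ h₁ h₂ =>
    intro v hv
    rw [map_add, add_mul, LinearMap.map_add, h₁ v hv, h₂ v hv, add_lie]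
  | hsmul c u h =>
    intro v hv
    rw [map_smul, smul_mul_assoc, LinearMap.map_smul, h v hv, lsmul']
  | hlie u₁ u₂ h₁ h₂ =>
    intro v hv
    have h12 : ω K X ⁅u₁, u₂⁆
        = ω K X u₁ * ω K X u₂ - ω K X u₂ * ω K X u₁ := by
      rw [LieHom.map_lie, Ring.lie_def]
    rw [h12, sub_mul, mul_assoc, mul_assoc, LinearMap.map_sub,
      h₁ _ (mul_mem_NN K X _ hv), h₂ _ (mul_mem_NN K X _ hv),
      h₂ v hv, h₁ v hv, lie_lie]

/-- Homogeneous component of degree `n`. -/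
def Tdeg (n : ℕ) : Submodule K (MA K X) :=
  Submodule.span K {v | ∃ l : List X, l.length = n ∧ v = sgl K X l}

theorem mul_mem_Tdeg {m n : ℕ} {a b : MA K X} (ha : a ∈ Tdeg K X m)
    (hb : b ∈ Tdeg K X n) : a * b ∈ Tdeg K X (m + n) := by
  induction ha using Submodule.span_induction with
  | mem a ha =>
    obtain ⟨l, hl, rfl⟩ := ha
    induction hb using Submodule.span_induction with
    | mem b hb =>
      obtain ⟨l', hl', rfl⟩ := hb
      rw [sgl_mul_sgl]
      exact Submodule.subset_span ⟨l ++ l', by simp [hl, hl'], rfl⟩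
    | zero => rw [mul_zero]; exact (Tdeg K X (m + n)).zero_mem
    | add a b _ _ iha ihb => rw [mul_add]; exact (Tdeg K X (m+n)).add_mem iha ihb
    | smul c a _ iha => rw [mul_smul_comm]; exact (Tdeg K X (m+n)).smul_mem _ iha
  | zero => rw [zero_mul]; exact (Tdeg K X (m + n)).zero_mem
  | add a b _ _ iha ihb => rw [add_mul]; exact (Tdeg K X (m+n)).add_mem iha ihb
  | smul c a _ iha => rw [smul_mul_assoc]; exact (Tdeg K X (m+n)).smul_mem _ iha

/-- `u` is a homogeneous element of degree `n` behaving well under the DSW map. -/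
def Good (n : ℕ) (u : FreeLieAlgebra K X) : Prop :=
  ω K X u ∈ Tdeg K X n ∧ phiT K X (ω K X u) = (n : K) • u

theorem good_of (x : X) : Good K X 1 (of K x) := by
  constructor
  · rw [ω_of]; exact Submodule.subset_span ⟨[x], rfl, rfl⟩
  · rw [ω_of, phiT_sgl, phiL_single, Nat.cast_one, fone_smul]

theorem good_smul {n : ℕ} {u : FreeLieAlgebra K X} (c : K) (h : Good K X n u) :
    Good K X n (c • u) := by
  obtain ⟨h1, h2⟩ := h
  refine ⟨by rw [map_smul]; exact (Tdeg K X n).smul_mem _ h1, ?_⟩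
  rw [map_smul, LinearMap.map_smul, h2, fsmul_comm]

theorem good_lie {m n : ℕ} {u v : FreeLieAlgebra K X} (hu : Good K X m u)
    (hv : Good K X n v) : Good K X (m + n) ⁅u, v⁆ := by
  obtain ⟨hu1, hu2⟩ := hu
  obtain ⟨hv1, hv2⟩ := hv
  have h12 : ω K X ⁅u, v⁆ = ω K X u * ω K X v - ω K X v * ω K X u := by
    rw [LieHom.map_lie, Ring.lie_def]
  constructor
  · rw [h12]
    exact (Tdeg K X (m+n)).sub_mem (mul_mem_Tdeg K X hu1 hv1)
      (by rw [add_comm m n]; exact mul_mem_Tdeg K X hv1 hu1)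
  · rw [h12, LinearMap.map_sub, lemA K X u _ (ω_mem_NN K X v),
      lemA K X v _ (ω_mem_NN K X u), hu2, hv2, lsmul, lsmul,
      ← lie_skew v u, smul_neg, sub_neg_eq_add, ← fadd_smul]
    push_cast
    rw [add_comm (n : K) (m : K)]


section CharZeroPart

/-- The span of good homogeneous elements. -/
def GoodSpan : Submodule K (FreeLieAlgebra K X) :=
  Submodule.span K {u | ∃ n : ℕ, n ≠ 0 ∧ Good K X n u}

theorem lie_mem_goodSpan {a b : FreeLieAlgebra K X} (ha : a ∈ GoodSpan K X)
    (hb : b ∈ GoodSpan K X) : ⁅a, b⁆ ∈ GoodSpan K X := by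
  induction ha using Submodule.span_induction with
  | mem a ha =>
    induction hb using Submodule.span_induction with
    | mem b hb =>
      obtain ⟨m, hm, hgm⟩ := ha
      obtain ⟨n, hn, hgn⟩ := hb
      exact Submodule.subset_span ⟨m + n, by omega, good_lie K X hgm hgn⟩
    | zero => rw [lie_zero]; exact (GoodSpan K X).zero_mem
    | add u v _ _ ihu ihv => rw [lie_add]; exact (GoodSpan K X).add_mem ihu ihv
    | smul c u _ ihu => rw [lsmul]; exact (GoodSpan K X).smul_mem _ ihu
  | zero => rw [zero_lie]; exact (GoodSpan K X).zero_mem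
  | add u v _ _ ihu ihv => rw [add_lie]; exact (GoodSpan K X).add_mem ihu ihv
  | smul c u _ ihu => rw [lsmul']; exact (GoodSpan K X).smul_mem _ ihu

theorem mem_goodSpan (u : FreeLieAlgebra K X) : u ∈ GoodSpan K X := by
  induction u using freeLie_induction with
  | hof x => exact Submodule.subset_span ⟨1, one_ne_zero, good_of K X x⟩
  | hzero => exact (GoodSpan K X).zero_mem
  | hadd u v hu hv => exact (GoodSpan K X).add_mem hu hv
  | hsmul c u hu => exact (GoodSpan K X).smul_mem _ hu
  | hlie u v hu hv => exact lie_mem_goodSpan K X hu hv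

theorem dynT_eq_on_Tdeg {n : ℕ} (hn : n ≠ 0) {v : MA K X} (hv : v ∈ Tdeg K X n) :
    dynT K X v = (n : K)⁻¹ • phiT K X v := by
  induction hv using Submodule.span_induction with
  | mem v hv =>
    obtain ⟨l, hl, rfl⟩ := hv
    rw [dynT_sgl, phiT_sgl, hl]
  | zero => rw [LinearMap.map_zero, LinearMap.map_zero, smul_zero]
  | add u v _ _ ihu ihv =>
    rw [LinearMap.map_add, LinearMap.map_add, ihu, ihv, smul_add]
  | smul c u _ ihu =>
    rw [LinearMap.map_smul, LinearMap.map_smul, ihu, fsmul_comm]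

theorem dynT_ω (u : FreeLieAlgebra K X) : dynT K X (ω K X u) = u := by
  have key : ∀ u ∈ GoodSpan K X, dynT K X (ω K X u) = u := by
    intro u hu
    induction hu using Submodule.span_induction with
    | mem u hu =>
      obtain ⟨n, hn, hT, hphi⟩ := hu
      rw [dynT_eq_on_Tdeg K X hn hT, hphi, fsmul_smul,
        inv_mul_cancel₀ (Nat.cast_ne_zero.mpr hn), fone_smul]
    | zero => rw [map_zero, LinearMap.map_zero]
    | add u v _ _ ihu ihv =>
      rw [map_add, LinearMap.map_add, ihu, ihv]
    | smul c u _ ihu => rw [map_smul, LinearMap.map_smul, ihu]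
  exact key u (mem_goodSpan K X u)

theorem ω_injective : Function.Injective (ω K X) := by
  intro a b h
  rw [← dynT_ω K X a, ← dynT_ω K X b, h]

end CharZeroPart


/-! ### Part 2: a representation of `G(²²₂₂)` on the word algebra -/

section Representation

/-- The action of `eᵢ`: left multiplication by the generator. -/
def Eop (i : Fin 2) : Module.End K (MA K (Fin 2)) :=
  LinearMap.mulLeft K (sgl K (Fin 2) [i])

/-- The action of `h`: twice the degree operator. -/
def Hop : Module.End K (MA K (Fin 2)) :=
  Finsupp.linearCombination K (fun w =>
    ((2 : K) * ((toList w).length : K)) • sgl K (Fin 2) (toList w)) ∘ₗ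
    (MonoidAlgebra.coeffLinearEquiv K).toLinearMap

/-- The action of `fⱼ` on words. -/
def FwL (j : Fin 2) : List (Fin 2) → MA K (Fin 2)
  | [] => 0
  | i :: t =>
    (if i = j then (-((2 : K) * (t.length : K))) • sgl K (Fin 2) t else 0)
      + sgl K (Fin 2) [i] * FwL j t

/-- The action of `fⱼ`. -/
def Fop (j : Fin 2) : Module.End K (MA K (Fin 2)) :=
  Finsupp.linearCombination K (fun w => FwL K j (toList w)) ∘ₗ
    (MonoidAlgebra.coeffLinearEquiv K).toLinearMap

theorem single_eq_smul_sgl (a : FreeMonoid (Fin 2)) (b : K) :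
    (MonoidAlgebra.single a b : MA K (Fin 2)) = b • sgl K (Fin 2) (toList a) := by
  unfold sgl
  rw [MonoidAlgebra.smul_single', mul_one, ofList_toList]

theorem fsingle_eq_smul_sgl (a : FreeMonoid (Fin 2)) (b : K) :
    (MonoidAlgebra.single a b : MA K (Fin 2)) = b • sgl K (Fin 2) (toList a) :=
  single_eq_smul_sgl K a b

theorem op_ext {T₁ T₂ : Module.End K (MA K (Fin 2))}
    (h : ∀ l : List (Fin 2), T₁ (sgl K (Fin 2) l) = T₂ (sgl K (Fin 2) l)) :
    T₁ = T₂ := by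
  apply MonoidAlgebra.lhom_ext'
  intro a
  apply LinearMap.ext
  intro b
  show T₁ (MonoidAlgebra.single a b) = T₂ (MonoidAlgebra.single a b)
  rw [fsingle_eq_smul_sgl, LinearMap.map_smul, LinearMap.map_smul]
  exact congrArg (fun z => b • z) (h (toList a))

theorem Eop_apply (i : Fin 2) (v : MA K (Fin 2)) :
    Eop K i v = sgl K (Fin 2) [i] * v := rfl

theorem Eop_sgl (i : Fin 2) (l : List (Fin 2)) :
    Eop K i (sgl K (Fin 2) l) = sgl K (Fin 2) (i :: l) := by
  rw [Eop_apply, sgl_mul_sgl]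
  rfl

theorem Hop_sgl (l : List (Fin 2)) :
    Hop K (sgl K (Fin 2) l) = ((2 : K) * (l.length : K)) • sgl K (Fin 2) l := by
  have h := Finsupp.linearCombination_single (R := K)
    (v := fun w => ((2 : K) * ((toList w).length : K)) • sgl K (Fin 2) (toList w))
    1 (ofList l)
  exact h.trans (one_smul K _)

theorem Fop_sgl (j : Fin 2) (l : List (Fin 2)) :
    Fop K j (sgl K (Fin 2) l) = FwL K j l := by
  have h := Finsupp.linearCombination_single (R := K)
    (v := fun w => FwL K j (toList w)) 1 (ofList l)
  exact h.trans (one_smul K _)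

theorem Hop_mul (i : Fin 2) (v : MA K (Fin 2)) :
    Hop K (sgl K (Fin 2) [i] * v)
      = (2 : K) • (sgl K (Fin 2) [i] * v) + sgl K (Fin 2) [i] * Hop K v := by
  induction v using MonoidAlgebra.induction_linear with
  | zero => rw [mul_zero, LinearMap.map_zero, mul_zero, smul_zero, add_zero]
  | add a b ha hb =>
    rw [mul_add, LinearMap.map_add, ha, hb, LinearMap.map_add, mul_add, smul_add]
    abel
  | single a b =>
    rw [fsingle_eq_smul_sgl]
    simp only [mul_smul_comm, LinearMap.map_smul, Hop_sgl, sgl_mul_sgl,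
      List.length_append, List.length_singleton]
    push_cast
    module

theorem Hop_FwL (j : Fin 2) (l : List (Fin 2)) :
    Hop K (FwL K j l) = ((2 : K) * (l.length : K) - 2) • FwL K j l := by
  induction l with
  | nil =>
    show Hop K (0 : MA K (Fin 2)) = ((2 : K) * (([] : List (Fin 2)).length : K) - 2) •
      (0 : MA K (Fin 2))
    rw [LinearMap.map_zero, smul_zero]
  | cons i t ih =>
    show Hop K ((if i = j then (-((2 : K) * (t.length : K))) • sgl K (Fin 2) t else 0)
        + sgl K (Fin 2) [i] * FwL K j t)
      = ((2 : K) * ((i :: t).length : K) - 2) •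
        ((if i = j then (-((2 : K) * (t.length : K))) • sgl K (Fin 2) t else 0)
          + sgl K (Fin 2) [i] * FwL K j t)
    rcases eq_or_ne i j with hij | hij
    · rw [if_pos hij, LinearMap.map_add, Hop_mul, ih]
      simp only [mul_smul_comm, LinearMap.map_smul, Hop_sgl, List.length_cons]
      push_cast
      module
    · rw [if_neg hij, zero_add, Hop_mul, ih]
      simp only [mul_smul_comm, List.length_cons]
      push_cast
      module

theorem rel1 (i : Fin 2) : ⁅Hop K, Eop K i⁆ = (2 : K) • Eop K i := by
  apply op_ext
  intro l
  rw [Ring.lie_def, LinearMap.sub_apply, LinearMap.smul_apply, Module.End.mul_apply,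
    Module.End.mul_apply]
  simp only [Eop_sgl, Hop_sgl, LinearMap.map_smul, List.length_cons]
  push_cast
  module

theorem rel2 (j : Fin 2) : ⁅Hop K, Fop K j⁆ + (2 : K) • Fop K j = 0 := by
  rw [add_eq_zero_iff_eq_neg]
  apply op_ext
  intro l
  rw [Ring.lie_def, LinearMap.sub_apply, LinearMap.neg_apply, LinearMap.smul_apply,
    Module.End.mul_apply, Module.End.mul_apply]
  simp only [Fop_sgl, Hop_FwL, Hop_sgl, LinearMap.map_smul]
  push_cast
  module

theorem rel3 (i j : Fin 2) :
    ⁅Eop K i, Fop K j⁆ = if i = j then Hop K else 0 := by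
  apply op_ext
  intro l
  rw [Ring.lie_def, LinearMap.sub_apply, Module.End.mul_apply, Module.End.mul_apply,
    Fop_sgl, Eop_sgl, Fop_sgl]
  show Eop K i (FwL K j l)
      - ((if i = j then (-((2 : K) * (l.length : K))) • sgl K (Fin 2) l else 0)
        + sgl K (Fin 2) [i] * FwL K j l)
      = (if i = j then Hop K else 0) (sgl K (Fin 2) l)
  rw [Eop_apply, apply_ite (fun T : Module.End K (MA K (Fin 2)) => T (sgl K (Fin 2) l)),
    LinearMap.zero_apply, Hop_sgl]
  rcases eq_or_ne i j with hij | hij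
  · rw [if_pos hij, if_pos hij]
    module
  · rw [if_neg hij, if_neg hij, zero_add, sub_self]

end Representation

/-! ### Part 3: the representation descends to `G(²²₂₂)` -/

/-- The images of the five generators. -/
def g5 : Fin 5 → Module.End K (MA K (Fin 2))
  | 0 => Hop K
  | 1 => Eop K 0
  | 2 => Eop K 1
  | 3 => Fop K 0
  | 4 => Fop K 1

/-- The representation of the free Lie algebra on five generators. -/
def ρ : F K →ₗ⁅K⁆ Module.End K (MA K (Fin 2)) :=
  FreeLieAlgebra.lift K (g5 K)

theorem ρ_hgen : ρ K (hgen K) = Hop K := by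
  rw [hgen, gen, ρ, lift_of_apply]
  rfl

theorem ρ_e (i : Fin 2) : ρ K (e K i) = Eop K i := by
  fin_cases i <;> rw [e, gen, ρ, lift_of_apply] <;> rfl

theorem ρ_f (j : Fin 2) : ρ K (f K j) = Fop K j := by
  fin_cases j <;> rw [f, gen, ρ, lift_of_apply] <;> rfl

theorem I_le_ker : I K ≤ (ρ K).ker := by
  rw [I]
  apply (LieSubmodule.lieSpan_le (R := K) (L := F K)).mpr
  rintro r ((⟨i, rfl⟩ | ⟨i, rfl⟩) | ⟨i, j, rfl⟩) <;>
    rw [SetLike.mem_coe, LieHom.mem_ker]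
  · rw [map_sub, LieHom.map_lie, map_smul, ρ_hgen, ρ_e, rel1, sub_self]
  · rw [map_add, LieHom.map_lie, map_smul, ρ_hgen, ρ_f, rel2]
  · rw [map_sub, LieHom.map_lie, ρ_e, ρ_f, apply_ite (ρ K), map_zero,
      ρ_hgen, rel3, sub_self]

/-- The representation of `G(²²₂₂)`. -/
def ρbar : G K →ₗ⁅K⁆ Module.End K (MA K (Fin 2)) :=
  { Submodule.liftQ (I K).toSubmodule (ρ K).toLinearMap
      (fun x hx => LieHom.mem_ker.mp (I_le_ker K hx)) with
    map_lie' := by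
      rintro x y
      obtain ⟨a, rfl⟩ := Submodule.Quotient.mk_surjective _ x
      obtain ⟨b, rfl⟩ := Submodule.Quotient.mk_surjective _ y
      show Submodule.liftQ _ _ _ ⁅LieSubmodule.Quotient.mk (N := I K) a,
          LieSubmodule.Quotient.mk (N := I K) b⁆ = _
      rw [← LieSubmodule.Quotient.mk_bracket]
      show ρ K ⁅a, b⁆ = ⁅ρ K a, ρ K b⁆
      rw [LieHom.map_lie] }

theorem ρbar_mk (x : F K) :
    ρbar K (LieSubmodule.Quotient.mk (N := I K) x) = ρ K x := rfl

/-! ### Part 4: the subalgebra generated by the images of `e₁, e₂` is free -/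

/-- The canonical morphism from the free Lie algebra on two generators. -/
def π : FreeLieAlgebra K (Fin 2) →ₗ⁅K⁆ G K :=
  FreeLieAlgebra.lift K fun i => E K i

theorem π_of (i : Fin 2) : π K (of K i) = E K i := lift_of_apply _ _

/-- Left multiplication as a morphism of Lie algebras. -/
def lmul : MA K (Fin 2) →ₗ⁅K⁆ Module.End K (MA K (Fin 2)) :=
  (Algebra.lmul K (MA K (Fin 2))).toLieHom

theorem lmul_injective : Function.Injective (lmul K) := by
  intro a b h
  have h2 : (lmul K a) 1 = (lmul K b) 1 := by rw [h]
  rw [← mul_one a, ← mul_one b]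
  exact h2

theorem ρbar_π (u : FreeLieAlgebra K (Fin 2)) :
    ρbar K (π K u) = lmul K (ω K (Fin 2) u) := by
  have h : (ρbar K).comp (π K) = (lmul K).comp (ω K (Fin 2)) := by
    apply hom_ext
    intro i
    rw [LieHom.comp_apply, LieHom.comp_apply, π_of, ω_of]
    show ρbar K (LieSubmodule.Quotient.mk (N := I K) (e K i)) = _
    rw [ρbar_mk, ρ_e]
    apply op_ext
    intro l
    rw [Eop_apply]
    rfl
  exact LieHom.congr_fun h u

theorem π_injective : Function.Injective (π K) := by
  intro a b h
  have h2 : lmul K (ω K (Fin 2) a) = lmul K (ω K (Fin 2) b) := by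
    rw [← ρbar_π, ← ρbar_π, h]
  exact ω_injective K (Fin 2) (lmul_injective K h2)

theorem E_mem_span (i : Fin 2) :
    E K i ∈ LieSubalgebra.lieSpan K (G K) {E K 0, E K 1} := by
  fin_cases i
  · exact LieSubalgebra.subset_lieSpan (Set.mem_insert _ _)
  · exact LieSubalgebra.subset_lieSpan (Set.mem_insert_of_mem _ rfl)

/-- The corestriction of `π` to the Lie subalgebra generated by `E 0, E 1`. -/
def π' : FreeLieAlgebra K (Fin 2) →ₗ⁅K⁆ LieSubalgebra.lieSpan K (G K) {E K 0, E K 1} :=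
  FreeLieAlgebra.lift K fun i => ⟨E K i, E_mem_span K i⟩

theorem incl_π' (u : FreeLieAlgebra K (Fin 2)) :
    ((π' K u : G K)) = π K u := by
  have h : (LieSubalgebra.lieSpan K (G K) {E K 0, E K 1}).incl.comp (π' K) = π K := by
    apply hom_ext
    intro i
    rw [LieHom.comp_apply, π_of, π']
    rw [lift_of_apply]
    rfl
  exact LieHom.congr_fun h u

theorem π'_injective : Function.Injective (π' K) := by
  intro a b h
  apply π_injective K
  rw [← incl_π', ← incl_π', h]

theorem π'_surjective : Function.Surjective (π' K) := by
  intro s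
  have hs : (s : G K) ∈ (π K).range := by
    have hle : LieSubalgebra.lieSpan K (G K) {E K 0, E K 1} ≤ (π K).range := by
      apply (LieSubalgebra.lieSpan_le (R := K)).mpr
      rintro x (rfl | rfl)
      · exact ⟨of K 0, π_of K 0⟩
      · exact ⟨of K 1, π_of K 1⟩
    exact hle s.2
  obtain ⟨u, hu⟩ := hs
  exact ⟨u, Subtype.ext (by rw [incl_π']; exact hu)⟩

/-- The Lie subalgebra generated by `E 0, E 1` is a free Lie algebra on two
generators. -/
def freeEquiv : FreeLieAlgebra K (Fin 2) ≃ₗ⁅K⁆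
    LieSubalgebra.lieSpan K (G K) {E K 0, E K 1} :=
  LieEquiv.ofBijective (π' K) ⟨π'_injective K, π'_surjective K⟩

theorem π'_of (i : Fin 2) : π' K (of K i) = ⟨E K i, E_mem_span K i⟩ := by
  rw [π', lift_of_apply]

theorem freeEquiv_symm_E (i : Fin 2) :
    (freeEquiv K).symm ⟨E K i, E_mem_span K i⟩ = of K i := by
  have h : freeEquiv K (of K i) = ⟨E K i, E_mem_span K i⟩ := π'_of K i
  rw [← h, LieEquiv.symm_apply_apply]

theorem freeEquiv_apply (u : FreeLieAlgebra K (Fin 2)) :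
    freeEquiv K u = π' K u := rfl


end Aux

/-- In `G(²²₂₂)`, the Lie subalgebra generated by `e₁` and `e₂` is a free Lie
algebra of rank two: every pair of elements of any Lie algebra `A` determines a
unique Lie algebra morphism out of it sending `e₁, e₂` to the given elements.
In particular `G(²²₂₂)` contains a non-abelian free Lie subalgebra. -/
theorem subalgebra_gen_by_e_is_free :
    ∀ (A : Type) [LieRing A] [LieAlgebra K A] (a₁ a₂ : A),
      ∃! φ : (LieSubalgebra.lieSpan K (G K) {E K 0, E K 1}) →ₗ⁅K⁆ A,
        φ ⟨E K 0, LieSubalgebra.subset_lieSpan (Set.mem_insert _ _)⟩ = a₁ ∧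
        φ ⟨E K 1, LieSubalgebra.subset_lieSpan (Set.mem_insert_of_mem _ rfl)⟩ = a₂ := by
  intro A _ _ a₁ a₂
  classical
  let θ : FreeLieAlgebra K (Fin 2) →ₗ⁅K⁆ A := FreeLieAlgebra.lift K ![a₁, a₂]
  have hθ0 : θ (FreeLieAlgebra.of K 0) = a₁ := by
    rw [FreeLieAlgebra.lift_of_apply]
    simp
  have hθ1 : θ (FreeLieAlgebra.of K 1) = a₂ := by
    rw [FreeLieAlgebra.lift_of_apply]
    simp
  refine ⟨θ.comp (freeEquiv K).symm.toLieHom, ⟨?_, ?_⟩, ?_⟩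
  · show θ ((freeEquiv K).symm ⟨E K 0, E_mem_span K 0⟩) = a₁
    rw [freeEquiv_symm_E, hθ0]
  · show θ ((freeEquiv K).symm ⟨E K 1, E_mem_span K 1⟩) = a₂
    rw [freeEquiv_symm_E, hθ1]
  · rintro φ' ⟨h1, h2⟩
    have hcomp : φ'.comp (π' K) = θ := by
      apply FreeLieAlgebra.hom_ext
      intro i
      fin_cases i
      · show φ' (π' K (FreeLieAlgebra.of K 0)) = θ (FreeLieAlgebra.of K 0)
        rw [π'_of, hθ0]
        exact h1
      · show φ' (π' K (FreeLieAlgebra.of K 1)) = θ (FreeLieAlgebra.of K 1)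
        rw [π'_of, hθ1]
        exact h2
    apply LieHom.ext
    intro s
    obtain ⟨u, rfl⟩ := π'_surjective K s
    have hr : (θ.comp (freeEquiv K).symm.toLieHom) (π' K u) = θ u := by
      show θ ((freeEquiv K).symm (π' K u)) = θ u
      rw [← freeEquiv_apply, LieEquiv.symm_apply_apply]
    rw [hr]
    exact LieHom.congr_fun hcomp u

end G2222
end

section
/- Let L = ⊕_{n∈Z} L_n be a finitely generated Z-graded Lie algebra over a field K with finite-dimensional components, and M a finitely generated Z-graded L-module. Then M_{≥0} = ⊕_{k≥0} M_k is a finitely generated module over the subalgebra L⁺ = ⊕_{k>0} L_k, given that L⁺ is generated by ⊕_{1≤k≤d} L_k for some d. -/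
section Aux

variable {K : Type*} [Field K]
    {L : Type*} [LieRing L] [LieAlgebra K L]
    {M : Type*} [AddCommGroup M] [Module K M] [LieRingModule L M] [LieModule K L M]

/-- Span of brackets of elements of a submodule of `L` with a submodule of `M`. -/
def bkSpan (A : Submodule K L) (B : Submodule K M) : Submodule K M :=
  Submodule.span K {m | ∃ x ∈ A, ∃ w ∈ B, ⁅x, w⁆ = m}

lemma lie_mem_bkSpan {A : Submodule K L} {B : Submodule K M} {x : L} {w : M}
    (hx : x ∈ A) (hw : w ∈ B) : ⁅x, w⁆ ∈ bkSpan A B :=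
  Submodule.subset_span ⟨x, hx, w, hw, rfl⟩

lemma bkSpan_le {A : Submodule K L} {B : Submodule K M} {C : Submodule K M}
    (h : ∀ x ∈ A, ∀ w ∈ B, ⁅x, w⁆ ∈ C) : bkSpan A B ≤ C := by
  apply Submodule.span_le.2
  rintro m ⟨x, hx, w, hw, rfl⟩
  exact h x hx w hw

variable (Lcomp : ℤ → Submodule K L) (Mcomp : ℤ → Submodule K M) (d e : ℤ)

/-- The recursively defined candidate components: below degree `e` they are the
components of `M`, above they are spanned by brackets with low positive degrees. -/
noncomputable def auxQ (n : ℤ) : Submodule K M :=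
  if n ≤ e then Mcomp n
  else ⨆ k : ℤ, ⨆ _ : 1 ≤ k ∧ k ≤ d, bkSpan (Lcomp k) (auxQ (n - k))
  termination_by (n - e).toNat
  decreasing_by omega

lemma auxQ_of_le {n : ℤ} (h : n ≤ e) : auxQ Lcomp Mcomp d e n = Mcomp n := by
  rw [auxQ, if_pos h]

lemma auxQ_of_gt {n : ℤ} (h : e < n) :
    auxQ Lcomp Mcomp d e n
      = ⨆ k : ℤ, ⨆ _ : 1 ≤ k ∧ k ≤ d, bkSpan (Lcomp k) (auxQ Lcomp Mcomp d e (n - k)) := by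
  rw [auxQ, if_neg (not_le.2 h)]

variable {Lcomp Mcomp d e}

lemma auxQ_le_comp
    (hact : ∀ n m : ℤ, ∀ x ∈ Lcomp n, ∀ v ∈ Mcomp m, ⁅x, v⁆ ∈ Mcomp (n + m)) :
    ∀ n : ℤ, auxQ Lcomp Mcomp d e n ≤ Mcomp n := by
  suffices h : ∀ t : ℕ, ∀ n : ℤ, (n - e).toNat ≤ t → auxQ Lcomp Mcomp d e n ≤ Mcomp n by
    intro n; exact h (n - e).toNat n le_rfl
  intro t
  induction t with
  | zero =>
    intro n hn
    rw [auxQ_of_le _ _ _ _ (by omega)]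
  | succ t ih =>
    intro n hn
    by_cases h : n ≤ e
    · rw [auxQ_of_le _ _ _ _ h]
    · rw [auxQ_of_gt _ _ _ _ (by omega)]
      refine iSup_le fun k => iSup_le fun hk => bkSpan_le fun x hx w hw => ?_
      have := hact k (n - k) x hx w (ih (n - k) (by omega) hw)
      rwa [show k + (n - k) = n by ring] at this

lemma auxQ_claimB
    (hact : ∀ n m : ℤ, ∀ x ∈ Lcomp n, ∀ v ∈ Mcomp m, ⁅x, v⁆ ∈ Mcomp (n + m))
    {k : ℤ} (hk1 : 1 ≤ k) (hk2 : k ≤ d) {x : L} (hx : x ∈ Lcomp k)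
    {n : ℤ} {v : M} (hv : v ∈ auxQ Lcomp Mcomp d e n) :
    ⁅x, v⁆ ∈ auxQ Lcomp Mcomp d e (n + k) := by
  by_cases h : n + k ≤ e
  · rw [auxQ_of_le _ _ _ _ (show n ≤ e by omega)] at hv
    rw [auxQ_of_le _ _ _ _ h]
    have := hact k n x hx v hv
    rwa [show k + n = n + k by ring] at this
  · rw [auxQ_of_gt _ _ _ _ (by omega)]
    have hle : bkSpan (Lcomp k) (auxQ Lcomp Mcomp d e (n + k - k))
        ≤ ⨆ k' : ℤ, ⨆ _ : 1 ≤ k' ∧ k' ≤ d, bkSpan (Lcomp k') (auxQ Lcomp Mcomp d e (n + k - k')) :=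
      le_iSup_of_le k (le_iSup_of_le ⟨hk1, hk2⟩ le_rfl)
    refine hle (lie_mem_bkSpan hx ?_)
    rwa [show n + k - k = n by ring]

lemma auxQ_claimA
    (hLbr : ∀ n m : ℤ, ∀ x ∈ Lcomp n, ∀ y ∈ Lcomp m, ⁅x, y⁆ ∈ Lcomp (n + m))
    (hact : ∀ n m : ℤ, ∀ x ∈ Lcomp n, ∀ v ∈ Mcomp m, ⁅x, v⁆ ∈ Mcomp (n + m)) :
    ∀ n : ℤ, ∀ j ≤ (0 : ℤ), ∀ x ∈ Lcomp j, ∀ v ∈ auxQ Lcomp Mcomp d e n,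
      ⁅x, v⁆ ∈ auxQ Lcomp Mcomp d e (n + j) := by
  suffices h : ∀ t : ℕ, ∀ n : ℤ, (n - e).toNat ≤ t → ∀ j ≤ (0 : ℤ), ∀ x ∈ Lcomp j,
      ∀ v ∈ auxQ Lcomp Mcomp d e n, ⁅x, v⁆ ∈ auxQ Lcomp Mcomp d e (n + j) by
    intro n; exact h (n - e).toNat n le_rfl
  intro t
  induction t with
  | zero =>
    intro n hn j hj x hx v hv
    rw [auxQ_of_le _ _ _ _ (show n ≤ e by omega)] at hv
    rw [auxQ_of_le _ _ _ _ (show n + j ≤ e by omega)]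
    have := hact j n x hx v hv
    rwa [show j + n = n + j by ring] at this
  | succ t ih =>
    intro n hn j hj x hx v hv
    by_cases h : n ≤ e
    · rw [auxQ_of_le _ _ _ _ h] at hv
      rw [auxQ_of_le _ _ _ _ (show n + j ≤ e by omega)]
      have := hact j n x hx v hv
      rwa [show j + n = n + j by ring] at this
    · rw [auxQ_of_gt _ _ _ _ (by omega)] at hv
      -- reduce to generators via comap of the linear endomorphism ⁅x, ·⁆
      have key : (⨆ k : ℤ, ⨆ _ : 1 ≤ k ∧ k ≤ d, bkSpan (Lcomp k) (auxQ Lcomp Mcomp d e (n - k)))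
          ≤ (auxQ Lcomp Mcomp d e (n + j)).comap (LieModule.toEnd K L M x) := by
        refine iSup_le fun k => iSup_le fun hk => bkSpan_le fun y hy w hw => ?_
        simp only [Submodule.mem_comap, LieModule.toEnd_apply_apply]
        rw [leibniz_lie]
        refine add_mem ?_ ?_
        · -- ⁅⁅x, y⁆, w⁆
          have hxy := hLbr j k x hx y hy
          by_cases hjk : j + k ≤ 0
          · have := ih (n - k) (by omega) (j + k) hjk _ hxy w hw
            rwa [show n - k + (j + k) = n + j by ring] at this
          · have := auxQ_claimB hact (k := j + k) (by omega) (by omega) hxy hw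
            rwa [show n - k + (j + k) = n + j by ring] at this
        · -- ⁅y, ⁅x, w⁆⁆
          have h1 := ih (n - k) (by omega) j hj x hx w hw
          have := auxQ_claimB hact hk.1 hk.2 hy h1
          rwa [show n - k + j + k = n + j by ring] at this
      have := key hv
      simpa only [Submodule.mem_comap, LieModule.toEnd_apply_apply] using this

end Aux

/-- Let `L = ⊕ₙ Lₙ` be a finitely generated `ℤ`-graded Lie algebra with
finite-dimensional components over a field `K`, and `M` a finitely generated
`ℤ`-graded `L`-module with finite-dimensional components.  Assume the positive
part `L⁺ = ⊕_{k>0} L_k` is generated, as a Lie algebra, by `⊕_{1 ≤ k ≤ d} L_k`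
for some `d`.  Then `M_{≥0} = ⊕_{k ≥ 0} M_k` is finitely generated over `L⁺`:
there is a finite subset `T` of `M_{≥0}` such that every `K`-subspace of `M`
containing `T` and stable under bracketing with `L⁺` contains `M_{≥0}`. -/
theorem nonnegativePart_finitelyGenerated_over_positivePart
    (K : Type*) [Field K]
    (L : Type*) [LieRing L] [LieAlgebra K L]
    (M : Type*) [AddCommGroup M] [Module K M] [LieRingModule L M] [LieModule K L M]
    (Lcomp : ℤ → Submodule K L) (Mcomp : ℤ → Submodule K M)
    (hLint : DirectSum.IsInternal Lcomp)
    (hLbr : ∀ n m : ℤ, ∀ x ∈ Lcomp n, ∀ y ∈ Lcomp m, ⁅x, y⁆ ∈ Lcomp (n + m))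
    (hMint : DirectSum.IsInternal Mcomp)
    (hact : ∀ n m : ℤ, ∀ x ∈ Lcomp n, ∀ v ∈ Mcomp m, ⁅x, v⁆ ∈ Mcomp (n + m))
    (hLfd : ∀ n : ℤ, FiniteDimensional K (Lcomp n))
    (hMfd : ∀ n : ℤ, FiniteDimensional K (Mcomp n))
    (hLfg : ∃ S : Finset L, LieSubalgebra.lieSpan K L ↑S = ⊤)
    (hMfg : ∃ S : Finset M, LieSubmodule.lieSpan K L (↑S : Set M) = ⊤)
    (d : ℤ) (hd : 0 < d)
    (hgen : ((LieSubalgebra.lieSpan K L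
        ((⨆ k ∈ Set.Icc (1 : ℤ) d, Lcomp k : Submodule K L) : Set L)
          : LieSubalgebra K L) : Set L)
      = ((⨆ k > (0 : ℤ), Lcomp k : Submodule K L) : Set L)) :
    ∃ T : Finset M,
      (↑T : Set M) ⊆ ((⨆ k ≥ (0 : ℤ), Mcomp k : Submodule K M) : Set M) ∧
      ∀ W : Submodule K M, (↑T : Set M) ⊆ (W : Set M) →
        (∀ x ∈ (⨆ k > (0 : ℤ), Lcomp k : Submodule K L), ∀ w ∈ W, ⁅x, w⁆ ∈ W) →
        (⨆ k ≥ (0 : ℤ), Mcomp k : Submodule K M) ≤ W := by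
  classical
  obtain ⟨S, hS⟩ := hMfg
  -- choose a degree bound for the generators
  have hbound : ∀ s : M, ∃ t : ℕ, s ∈ ⨆ n : ℤ, ⨆ _ : n ≤ (t : ℤ), Mcomp n := by
    intro s
    have hs : s ∈ ⨆ n : ℤ, Mcomp n := by
      rw [hMint.submodule_iSup_eq_top]; exact Submodule.mem_top
    rw [Submodule.mem_iSup_iff_exists_finset] at hs
    obtain ⟨F, hF⟩ := hs
    refine ⟨F.sup Int.toNat, ?_⟩
    refine (iSup_le fun n => iSup_le fun hn => ?_ : (⨆ n ∈ F, Mcomp n) ≤ _) hF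
    refine le_iSup_of_le n (le_iSup_of_le ?_ le_rfl)
    have : n.toNat ≤ F.sup Int.toNat := Finset.le_sup hn
    omega
  choose f hf using hbound
  set e : ℤ := ((S.sup f : ℕ) : ℤ) with he
  set Q : ℤ → Submodule K M := auxQ Lcomp Mcomp d e with hQ
  set P : Submodule K M := ⨆ n : ℤ, Q n with hP
  have hQM : ∀ n, Q n ≤ Mcomp n := auxQ_le_comp hact
  -- P is stable under the whole of L
  have hstab : ∀ x : L, ∀ v ∈ P, ⁅x, v⁆ ∈ P := by
    intro x₀ v₀ hv₀
    let Sm : Submodule K L :=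
      { carrier := {x : L | ∀ v ∈ P, ⁅x, v⁆ ∈ P}
        add_mem' := fun ha hb v hv => by
          rw [add_lie]; exact add_mem (ha v hv) (hb v hv)
        zero_mem' := fun v hv => by rw [zero_lie]; exact zero_mem _
        smul_mem' := fun c a ha v hv => by
          rw [smul_lie]; exact Submodule.smul_mem _ _ (ha v hv) }
    have memSm : ∀ (x : L), (∀ n : ℤ, ∀ v ∈ Q n, ∃ m : ℤ, ⁅x, v⁆ ∈ Q m) → x ∈ Sm := by
      intro x hx
      intro v hv
      have : P ≤ (P.comap (LieModule.toEnd K L M x)) := by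
        refine iSup_le fun n => fun w hw => ?_
        obtain ⟨m, hm⟩ := hx n w hw
        simp only [Submodule.mem_comap, LieModule.toEnd_apply_apply]
        exact Submodule.mem_iSup_of_mem m hm
      have := this hv
      simpa only [Submodule.mem_comap, LieModule.toEnd_apply_apply] using this
    -- nonpositive components act
    have hneg : ∀ j ≤ (0 : ℤ), Lcomp j ≤ Sm := by
      intro j hj x hx
      exact memSm x fun n v hv => ⟨n + j, auxQ_claimA hLbr hact n j hj x hx v hv⟩
    -- components in [1, d] act
    have hIcc : ∀ k : ℤ, 1 ≤ k → k ≤ d → Lcomp k ≤ Sm := by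
      intro k hk1 hk2 x hx
      exact memSm x fun n v hv => ⟨n + k, auxQ_claimB hact hk1 hk2 hx hv⟩
    -- the Lie subalgebra structure on Sm
    let SL : LieSubalgebra K L :=
      { Sm with
        lie_mem' := fun {a b} ha hb v hv => by
          rw [lie_lie]
          exact sub_mem (ha _ (hb v hv)) (hb _ (ha v hv)) }
    have hU : ((⨆ k ∈ Set.Icc (1 : ℤ) d, Lcomp k : Submodule K L) : Set L) ⊆ SL := by
      intro x hx
      have : (⨆ k ∈ Set.Icc (1 : ℤ) d, Lcomp k : Submodule K L) ≤ Sm :=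
        iSup_le fun k => iSup_le fun hk => hIcc k hk.1 hk.2
      exact this hx
    have hspan : (LieSubalgebra.lieSpan K L
        ((⨆ k ∈ Set.Icc (1 : ℤ) d, Lcomp k : Submodule K L) : Set L)) ≤ SL :=
      LieSubalgebra.lieSpan_le.2 hU
    have hpos : ∀ j : ℤ, 0 < j → Lcomp j ≤ Sm := by
      intro j hj x hx
      have h1 : x ∈ (⨆ k > (0 : ℤ), Lcomp k : Submodule K L) :=
        Submodule.mem_iSup_of_mem j (Submodule.mem_iSup_of_mem hj hx)
      have h2 : x ∈ ((LieSubalgebra.lieSpan K L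
          ((⨆ k ∈ Set.Icc (1 : ℤ) d, Lcomp k : Submodule K L) : Set L)) : Set L) := by
        rw [hgen]; exact h1
      exact hspan h2
    have hall : (⊤ : Submodule K L) ≤ Sm := by
      rw [← hLint.submodule_iSup_eq_top]
      refine iSup_le fun j => ?_
      rcases le_or_gt j 0 with h | h
      · exact hneg j h
      · exact hpos j h
    exact hall Submodule.mem_top v₀ hv₀
  -- P is all of M
  have hPtop : ∀ m : M, m ∈ P := by
    let PL : LieSubmodule K L M :=
      { P with lie_mem := fun {x m} hm => hstab x m hm }
    have hSP : (↑S : Set M) ⊆ PL := by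
      intro s hs
      have h1 := hf s
      have h2 : (⨆ n : ℤ, ⨆ _ : n ≤ ((f s : ℕ) : ℤ), Mcomp n) ≤ P := by
        refine iSup_le fun n => iSup_le fun hn => ?_
        have hne : n ≤ e := by
          have : f s ≤ S.sup f := Finset.le_sup hs
          omega
        have : Mcomp n = Q n := (auxQ_of_le Lcomp Mcomp d e hne).symm
        rw [this]
        exact le_iSup _ n
      exact h2 h1
    intro m
    have : (⊤ : LieSubmodule K L M) ≤ PL := by
      rw [← hS]; exact LieSubmodule.lieSpan_le.2 hSP
    exact this trivial
  -- components of M are contained in the Q's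
  have hMQ : ∀ n : ℤ, Mcomp n ≤ Q n := by
    intro n v hv
    have hvP : v ∈ P := hPtop v
    rw [hP, Submodule.mem_iSup_iff_exists_finsupp] at hvP
    obtain ⟨g, hg, hsum⟩ := hvP
    have hvn : v - g n ∈ Mcomp n := sub_mem hv (hQM n (hg n))
    have hrest : v - g n ∈ ⨆ m : ℤ, ⨆ _ : m ≠ n, Mcomp m := by
      have : v - g n = (g.erase n).sum fun _ x => x := by
        rw [← hsum]
        rcases eq_or_ne (g n) 0 with h0 | h0
        · rw [h0, sub_zero, Finsupp.erase_of_notMem_support]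
          simp [Finsupp.mem_support_iff, h0]
        · rw [← Finsupp.add_sum_erase' g n _ (fun _ => rfl)]
          abel
      rw [this]
      refine Submodule.sum_mem _ fun m hm => ?_
      have hmn : m ≠ n := by
        by_contra hc
        subst hc
        simp [Finsupp.mem_support_iff] at hm
      have : (g.erase n) m = g m := Finsupp.erase_ne hmn
      rw [this]
      exact Submodule.mem_iSup_of_mem m (Submodule.mem_iSup_of_mem hmn (hQM m (hg m)))
    have hdisj := hMint.submodule_iSupIndep n
    have : v - g n = 0 := by
      rw [disjoint_iff] at hdisj
      have := Submodule.mem_inf.2 ⟨hvn, hrest⟩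
      rw [hdisj] at this
      simpa using this
    have : v = g n := by rwa [sub_eq_zero] at this
    rw [this]
    exact hg n
  -- the spanning finite set
  obtain ⟨N, heN, hdN, hN0⟩ : ∃ N : ℤ, e ≤ N ∧ d - 1 ≤ N ∧ 0 ≤ N :=
    ⟨max e (d - 1), le_max_left _ _, le_max_right _ _,
      le_trans (Int.natCast_nonneg _) (le_max_left _ _)⟩
  set V : Submodule K M := (Finset.Icc (0 : ℤ) N).sup Mcomp with hV
  have hVfd : FiniteDimensional K V := Submodule.finiteDimensional_finset_sup _ _
  obtain ⟨T, hT⟩ := (Submodule.fg_iff_finiteDimensional V).2 hVfd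
  refine ⟨T, ?_, ?_⟩
  · intro t ht
    have h1 : (t : M) ∈ V := by
      rw [← hT]; exact Submodule.subset_span ht
    have h2 : V ≤ ⨆ k ≥ (0 : ℤ), Mcomp k := by
      refine Finset.sup_le fun n hn => ?_
      have := Finset.mem_Icc.1 hn
      exact le_iSup_of_le n (le_iSup_of_le this.1 le_rfl)
    exact h2 h1
  · intro W hTW hWstab
    have hVW : V ≤ W := by
      rw [← hT]
      exact Submodule.span_le.2 hTW
    have hcompW : ∀ t : ℕ, ∀ n : ℤ, 0 ≤ n → n.toNat ≤ t → Mcomp n ≤ W := by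
      intro t
      induction t with
      | zero =>
        intro n hn0 hnt
        have hn : n = 0 := by omega
        subst hn
        refine le_trans ?_ hVW
        exact Finset.le_sup (Finset.mem_Icc.2 ⟨le_rfl, by omega⟩)
      | succ t ih =>
        intro n hn0 hnt
        by_cases hnN : n ≤ N
        · refine le_trans ?_ hVW
          exact Finset.le_sup (Finset.mem_Icc.2 ⟨hn0, hnN⟩)
        · have hne : e < n := by omega
          refine le_trans (hMQ n) ?_
          rw [hQ, auxQ_of_gt _ _ _ _ hne]
          refine iSup_le fun k => iSup_le fun hk => bkSpan_le fun y hy w hw => ?_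
          have hw' : w ∈ Mcomp (n - k) := hQM _ hw
          have hWk : w ∈ W := ih (n - k) (by omega) (by omega) hw'
          have hyL : y ∈ (⨆ k > (0 : ℤ), Lcomp k : Submodule K L) :=
            Submodule.mem_iSup_of_mem k (Submodule.mem_iSup_of_mem (by omega) hy)
          exact hWstab y hyL w hWk
    refine iSup_le fun n => iSup_le fun hn => ?_
    exact hcompW n.toNat n hn le_rfl
end
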